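/- Let K be a commutative ring with 2 invertible, u_1,...,u_a ∈ K, and suppose ω : ℕ → K is u-admissible (i.e. 1 - t/2 + Σ_{i≥0} ω_i t^{i+1} = (1 - (-1)^a t/2) ∏_{i=1}^a (1+u_i t)/(1-u_i t) in K[[t]]). Then for every odd positive integer k, 2ω_k = -ω_{k-1} + Σ_{j=1}^{k} (-1)^{j-1} ω_{j-1} ω_{k-j}. -/

import Mathlib

open PowerSeries Finset

private lemma rescale_neg_one_linear {K : Type*} [CommRing K] (c : K) :
    rescale (-1) (1 - PowerSeries.C (R := K) c * X) = 1 + PowerSeries.C (R := K) c * X := by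
  ext n
  rcases n with _ | _ | n <;>
    simp [coeff_rescale, coeff_one, coeff_X, PowerSeries.coeff_C_mul]

private lemma key_identity {K : Type*} [CommRing K] [Invertible (2 : K)]
    (a : ℕ) (u : Fin a → K) (ω : ℕ → K)
    (hadm : (1 - PowerSeries.C (R := K) (⅟2) * PowerSeries.X
          + PowerSeries.mk (fun n => if n = 0 then 0 else ω (n - 1)))
        * ∏ i : Fin a, (1 - PowerSeries.C (R := K) (u i) * PowerSeries.X)
      = (1 - PowerSeries.C (R := K) ((-1) ^ a * ⅟2) * PowerSeries.X)
        * ∏ i : Fin a, (1 + PowerSeries.C (R := K) (u i) * PowerSeries.X)) :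
    (1 - PowerSeries.C (R := K) (⅟2) * PowerSeries.X
        + PowerSeries.mk (fun n => if n = 0 then 0 else ω (n - 1)))
      * rescale (-1) (1 - PowerSeries.C (R := K) (⅟2) * PowerSeries.X
        + PowerSeries.mk (fun n => if n = 0 then 0 else ω (n - 1)))
      = 1 - PowerSeries.C (R := K) (⅟2 * ⅟2) * X ^ 2 := by
  set G := 1 - PowerSeries.C (R := K) (⅟2) * PowerSeries.X
        + PowerSeries.mk (fun n => if n = 0 then 0 else ω (n - 1)) with hG
  set P := ∏ i : Fin a, (1 - PowerSeries.C (R := K) (u i) * PowerSeries.X) with hP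
  set Q := ∏ i : Fin a, (1 + PowerSeries.C (R := K) (u i) * PowerSeries.X) with hQ
  set c : K := (-1) ^ a * ⅟2 with hc
  have h2 := congrArg (rescale (-1)) hadm
  rw [map_mul, map_mul, map_prod, map_prod] at h2
  have hr2 : ∀ i : Fin a, rescale (-1) (1 + PowerSeries.C (R := K) (u i) * X)
      = 1 - PowerSeries.C (R := K) (u i) * X := by
    intro i
    have := rescale_neg_one_linear (K := K) (-(u i))
    rw [map_neg] at this
    rw [show (1 + PowerSeries.C (R := K) (u i) * X)
        = 1 - -PowerSeries.C (R := K) (u i) * X by ring, this]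
    ring
  rw [Finset.prod_congr rfl (fun i _ => rescale_neg_one_linear (u i)),
      Finset.prod_congr rfl (fun i _ => hr2 i),
      rescale_neg_one_linear] at h2
  have hmul : (G * rescale (-1) G) * (P * Q)
      = ((1 - PowerSeries.C (R := K) c * X) * (1 + PowerSeries.C (R := K) c * X)) * (P * Q) := by
    calc (G * rescale (-1) G) * (P * Q)
        = (G * P) * (rescale (-1) G * Q) := by ring
      _ = ((1 - PowerSeries.C (R := K) c * X) * Q) * ((1 + PowerSeries.C (R := K) c * X) * P) := by
          rw [hadm, h2]
      _ = _ := by ring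
  have hPQ : IsUnit (P * Q) := by
    rw [isUnit_iff_constantCoeff]
    simp [hP, hQ, map_mul, map_prod]
  rw [hPQ.mul_right_cancel hmul]
  have hc2 : c ^ 2 = ⅟2 * ⅟2 := by
    rw [hc, mul_pow, ← pow_mul, mul_comm a 2, pow_mul, neg_one_sq, one_pow, one_mul, sq]
  rw [show (1 - PowerSeries.C (R := K) c * X) * (1 + PowerSeries.C (R := K) c * X)
      = 1 - PowerSeries.C (R := K) (c ^ 2) * X ^ 2 by rw [map_pow]; ring, hc2]

theorem u_admissible_implies_admissible (K : Type*) [CommRing K] [Invertible (2 : K)]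
    (a : ℕ) (u : Fin a → K) (ω : ℕ → K)
    (hadm : (1 - PowerSeries.C (R := K) (⅟2) * PowerSeries.X
          + PowerSeries.mk (fun n => if n = 0 then 0 else ω (n - 1)))
        * ∏ i : Fin a, (1 - PowerSeries.C (R := K) (u i) * PowerSeries.X)
      = (1 - PowerSeries.C (R := K) ((-1) ^ a * ⅟2) * PowerSeries.X)
        * ∏ i : Fin a, (1 + PowerSeries.C (R := K) (u i) * PowerSeries.X)) :
    ∀ k : ℕ, Odd k →
      2 * ω k = -ω (k - 1) +
        ∑ j ∈ Finset.Icc 1 k, (-1 : K) ^ (j - 1) * ω (j - 1) * ω (k - j) := by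
  intro k hk
  have hk1 : 1 ≤ k := hk.pos
  have key := key_identity a u ω hadm
  set G := 1 - PowerSeries.C (R := K) (⅟2) * PowerSeries.X
        + PowerSeries.mk (fun n => if n = 0 then 0 else ω (n - 1)) with hG
  set h : ℕ → K := fun n => if n = 0 then 1 else ω (n - 1) with hh
  set d : ℕ → K := fun n => if n = 1 then ⅟2 else 0 with hd
  have hgc : ∀ n, coeff (R := K) n G = h n - d n := by
    intro n
    rcases n with _ | _ | n <;>
      simp [hG, hh, hd, coeff_one, coeff_X, PowerSeries.coeff_C_mul] <;> ring
  have hpow : ∀ i, i < k → ((-1 : K)) ^ (k - i) = -(-1) ^ i := by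
    intro i hi
    have h1 : (-1 : K) ^ (k - i) * (-1) ^ i = -1 := by
      rw [← pow_add, show k - i + i = k by omega, hk.neg_one_pow]
    have h2 : ((-1 : K) ^ i) * ((-1) ^ i) = 1 := by
      rw [← pow_add, ← two_mul, pow_mul, neg_one_sq, one_pow]
    calc (-1 : K) ^ (k - i) = (-1) ^ (k - i) * ((-1) ^ i * (-1) ^ i) := by
          rw [h2, mul_one]
      _ = ((-1) ^ (k - i) * (-1) ^ i) * (-1) ^ i := by ring
      _ = -(-1) ^ i := by rw [h1]; ring
  have hc := congrArg (coeff (R := K) (k + 1)) key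
  rw [coeff_mul, Finset.Nat.sum_antidiagonal_eq_sum_range_succ_mk] at hc
  have hrhs : coeff (R := K) (k + 1) (1 - PowerSeries.C (R := K) (⅟2 * ⅟2) * X ^ 2)
      = -((⅟2 * ⅟2) * (if k = 1 then (1 : K) else 0)) := by
    rw [map_sub, coeff_one, PowerSeries.coeff_C_mul, coeff_X_pow]
    have he : (k + 1 = 2) = (k = 1) := by simp [Nat.succ_inj]
    simp [he]
  rw [hrhs] at hc
  have hsummand : ∀ i ∈ range (k + 1 + 1),
      coeff (R := K) i G * coeff (R := K) (k + 1 - i) (rescale (-1) G)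
      = (-1 : K) ^ (k + 1 - i) * (h i * h (k + 1 - i))
        - (-1 : K) ^ (k + 1 - i) * (h i * d (k + 1 - i))
        - (-1 : K) ^ (k + 1 - i) * (d i * h (k + 1 - i))
        + (-1 : K) ^ (k + 1 - i) * (d i * d (k + 1 - i)) := by
    intro i _
    rw [coeff_rescale, hgc, hgc]
    ring
  rw [Finset.sum_congr rfl hsummand] at hc
  simp only [Finset.sum_add_distrib, Finset.sum_sub_distrib] at hc
  have Shd : ∑ i ∈ range (k + 1 + 1), (-1 : K) ^ (k + 1 - i) * (h i * d (k + 1 - i))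
      = -(ω (k - 1) * ⅟2) := by
    have hcg : ∀ i ∈ range (k + 1 + 1), (-1 : K) ^ (k + 1 - i) * (h i * d (k + 1 - i))
        = if i = k then -(ω (k - 1) * ⅟2) else 0 := by
      intro i hi
      rw [Finset.mem_range] at hi
      by_cases hik : i = k
      · rw [hik, show k + 1 - k = 1 by omega]
        simp [hh, hd, show ¬ (k = 0) by omega, hk.neg_one_pow]
      · have : k + 1 - i ≠ 1 := by omega
        simp [hd, this, hik]
    rw [Finset.sum_congr rfl hcg, Finset.sum_ite_eq']
    simp [Nat.lt_succ_iff]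
  have Sdh : ∑ i ∈ range (k + 1 + 1), (-1 : K) ^ (k + 1 - i) * (d i * h (k + 1 - i))
      = -(⅟2 * ω (k - 1)) := by
    have hcg : ∀ i ∈ range (k + 1 + 1), (-1 : K) ^ (k + 1 - i) * (d i * h (k + 1 - i))
        = if i = 1 then -(⅟2 * ω (k - 1)) else 0 := by
      intro i _
      by_cases hi1 : i = 1
      · subst hi1
        rw [show k + 1 - 1 = k by omega]
        simp [hh, hd, show ¬ (k = 0) by omega, hk.neg_one_pow]
      · simp [hd, hi1]
    rw [Finset.sum_congr rfl hcg, Finset.sum_ite_eq']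
    simp [Nat.lt_succ_iff, hk1]
  have Sdd : ∑ i ∈ range (k + 1 + 1), (-1 : K) ^ (k + 1 - i) * (d i * d (k + 1 - i))
      = -((⅟2 * ⅟2) * (if k = 1 then (1 : K) else 0)) := by
    have hcg : ∀ i ∈ range (k + 1 + 1), (-1 : K) ^ (k + 1 - i) * (d i * d (k + 1 - i))
        = if i = 1 then -((⅟2 * ⅟2) * (if k = 1 then (1 : K) else 0)) else 0 := by
      intro i _
      by_cases hi1 : i = 1
      · subst hi1
        rw [show k + 1 - 1 = k by omega]
        by_cases hk1' : k = 1
        · subst hk1'; simp [hd]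
        · simp [hd, hk1', hk.neg_one_pow]
      · simp [hd, hi1]
    rw [Finset.sum_congr rfl hcg, Finset.sum_ite_eq']
    simp [Nat.lt_succ_iff, hk1]
  have hT : ∑ j ∈ Finset.Icc 1 k, (-1 : K) ^ (j - 1) * ω (j - 1) * ω (k - j)
      = ∑ i ∈ range k, (-1 : K) ^ i * ω i * ω (k - 1 - i) := by
    rw [← Finset.Ico_add_one_right_eq_Icc, Finset.sum_Ico_eq_sum_range]
    apply Finset.sum_congr rfl
    intro i _
    rw [show 1 + i - 1 = i by omega, show k - (1 + i) = k - 1 - i by omega]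
  have Shh : ∑ i ∈ range (k + 1 + 1), (-1 : K) ^ (k + 1 - i) * (h i * h (k + 1 - i))
      = 2 * ω k - ∑ j ∈ Finset.Icc 1 k, (-1 : K) ^ (j - 1) * ω (j - 1) * ω (k - j) := by
    rw [Finset.sum_range_succ, Finset.sum_range_succ']
    have hlast : (-1 : K) ^ (k + 1 - (k + 1)) * (h (k + 1) * h (k + 1 - (k + 1))) = ω k := by
      rw [Nat.sub_self]
      simp [hh]
    have hfirst : (-1 : K) ^ (k + 1 - 0) * (h 0 * h (k + 1 - 0)) = ω k := by
      rw [Nat.sub_zero]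
      simp [hh, (hk.add_one).neg_one_pow]
    have hmid : ∀ i ∈ range k, (-1 : K) ^ (k + 1 - (i + 1)) * (h (i + 1) * h (k + 1 - (i + 1)))
        = -((-1 : K) ^ i * ω i * ω (k - 1 - i)) := by
      intro i hi
      rw [Finset.mem_range] at hi
      rw [show k + 1 - (i + 1) = k - i by omega, hpow i hi]
      have hne : ¬ (k - i = 0) := by omega
      simp only [hh]
      rw [if_neg (Nat.succ_ne_zero i), if_neg hne,
        show i + 1 - 1 = i by omega, show k - i - 1 = k - 1 - i by omega]
      ring
    rw [Finset.sum_congr rfl hmid, hlast, hfirst, hT, Finset.sum_neg_distrib]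
    ring
  rw [Shh, Shd, Sdh, Sdd] at hc
  have h22 : (⅟2 : K) * 2 = 1 := invOf_mul_self 2
  linear_combination hc - ω (k - 1) * h22
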